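/- Let T = 2k with k ≥ 3, and let w be a word of length T on states {1,2,3} without self-loops, with transition counts x_{ij}. Then (3k−1)·x_{12} + k·(x_{13} + x_{32}) ≥ (k−1)·(x_{21} + x_{23} + x_{31}). -/

import Mathlib

set_option maxHeartbeats 1000000


/-- Transition count of the word `s` (with `T` letters, indices `0,...,T-1`)
from state `i` to state `j`. -/
def tcount (s : ℕ → Fin 3) (T : ℕ) (i j : Fin 3) : ℕ :=
  ((Finset.range (T - 1)).filter (fun t => s t = i ∧ s (t + 1) = j)).card

/-- `s` is a word of length `T` on the three states without self-loops. -/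
def IsWord (s : ℕ → Fin 3) (T : ℕ) : Prop :=
  ∀ t, t + 1 < T → s t ≠ s (t + 1)

private lemma fin3cases (x : Fin 3) : x = 0 ∨ x = 1 ∨ x = 2 := by revert x; decide

theorem stmt9 (k : ℕ) (hk : 3 ≤ k) (s : ℕ → Fin 3) (hs : IsWord s (2 * k)) :
    (3 * k - 1) * tcount s (2 * k) 0 1 +
        k * (tcount s (2 * k) 0 2 + tcount s (2 * k) 2 1) ≥
      (k - 1) * (tcount s (2 * k) 1 0 + tcount s (2 * k) 1 2 + tcount s (2 * k) 2 0) := by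
  have hW : ∀ t, t + 1 < 2 * k → s t ≠ s (t + 1) := hs
  set n : ℕ := 2 * k - 1 with hn
  set R : Finset ℕ := Finset.range n with hR
  set F : Fin 3 → Fin 3 → Finset ℕ :=
    fun i j => R.filter (fun t => s t = i ∧ s (t + 1) = j) with hF
  have htc : ∀ i j, tcount s (2 * k) i j = (F i j).card := fun i j => rfl
  set A : Finset ℕ := R.filter (fun t => s t = 0) with hA
  set B : Finset ℕ := R.filter (fun t => s (t + 1) = 1) with hB
  -- Step 1 : A.card ≤ x01 + x02
  have hAsub : A ⊆ F 0 1 ∪ F 0 2 := by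
    intro t ht
    simp only [hA, Finset.mem_filter, hR, Finset.mem_range] at ht
    have h1 : t + 1 < 2 * k := by omega
    have h2 := hW t h1
    rw [ht.2] at h2
    rcases fin3cases (s (t + 1)) with h | h | h
    · exact absurd h.symm h2
    · refine Finset.mem_union_left _ ?_
      simp only [hF, Finset.mem_filter, hR, Finset.mem_range]
      exact ⟨ht.1, ht.2, h⟩
    · refine Finset.mem_union_right _ ?_
      simp only [hF, Finset.mem_filter, hR, Finset.mem_range]
      exact ⟨ht.1, ht.2, h⟩
  have hAcard : A.card ≤ (F 0 1).card + (F 0 2).card :=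
    le_trans (Finset.card_le_card hAsub) (Finset.card_union_le _ _)
  -- Step 2 : B.card ≤ x01 + x21
  have hBsub : B ⊆ F 0 1 ∪ F 2 1 := by
    intro t ht
    simp only [hB, Finset.mem_filter, hR, Finset.mem_range] at ht
    have h1 : t + 1 < 2 * k := by omega
    have h2 := hW t h1
    rw [ht.2] at h2
    rcases fin3cases (s t) with h | h | h
    · refine Finset.mem_union_left _ ?_
      simp only [hF, Finset.mem_filter, hR, Finset.mem_range]
      exact ⟨ht.1, h, ht.2⟩
    · exact absurd h h2
    · refine Finset.mem_union_right _ ?_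
      simp only [hF, Finset.mem_filter, hR, Finset.mem_range]
      exact ⟨ht.1, h, ht.2⟩
  have hBcard : B.card ≤ (F 0 1).card + (F 2 1).card :=
    le_trans (Finset.card_le_card hBsub) (Finset.card_union_le _ _)
  -- Step 3 : k - 1 ≤ A.card + B.card
  set P0 : Finset ℕ := R.filter (fun p => 1 ≤ p ∧ s p = 0) with hP0
  set P1 : Finset ℕ := R.filter (fun p => 1 ≤ p ∧ s p = 1) with hP1
  have hstep3a : k - 1 ≤ (P0 ∪ P1).card := by
    have := Finset.card_le_card_of_injOn
      (f := fun j => if s (2 * j + 1) = 0 ∨ s (2 * j + 1) = 1 then 2 * j + 1 else 2 * j + 2)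
      (s := Finset.range (k - 1)) (t := P0 ∪ P1) ?_ ?_
    · simpa using this
    · intro j hj
      simp only [Finset.mem_coe, Finset.mem_range] at hj
      show (if s (2 * j + 1) = 0 ∨ s (2 * j + 1) = 1 then 2 * j + 1 else 2 * j + 2) ∈ P0 ∪ P1
      by_cases h : s (2 * j + 1) = 0 ∨ s (2 * j + 1) = 1
      · rw [if_pos h]
        rcases h with h | h
        · refine Finset.mem_union_left _ ?_
          simp only [hP0, Finset.mem_filter, hR, Finset.mem_range]
          exact ⟨by omega, by omega, h⟩
        · refine Finset.mem_union_right _ ?_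
          simp only [hP1, Finset.mem_filter, hR, Finset.mem_range]
          exact ⟨by omega, by omega, h⟩
      · rw [if_neg h]
        push_neg at h
        have h2 : s (2 * j + 1) = 2 := by
          rcases fin3cases (s (2 * j + 1)) with h' | h' | h'
          · exact absurd h' h.1
          · exact absurd h' h.2
          · exact h'
        have h3 : s (2 * j + 1) ≠ s (2 * j + 1 + 1) := hW _ (by omega)
        rw [h2] at h3
        rcases fin3cases (s (2 * j + 2)) with h' | h' | h'
        · refine Finset.mem_union_left _ ?_
          simp only [hP0, Finset.mem_filter, hR, Finset.mem_range]
          exact ⟨by omega, by omega, h'⟩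
        · refine Finset.mem_union_right _ ?_
          simp only [hP1, Finset.mem_filter, hR, Finset.mem_range]
          exact ⟨by omega, by omega, h'⟩
        · exfalso
          apply h3
          have : 2 * j + 1 + 1 = 2 * j + 2 := by omega
          rw [this, h']
    · intro a _ b _ hab
      have hab' : (if s (2 * a + 1) = 0 ∨ s (2 * a + 1) = 1 then 2 * a + 1 else 2 * a + 2)
          = (if s (2 * b + 1) = 0 ∨ s (2 * b + 1) = 1 then 2 * b + 1 else 2 * b + 2) := hab
      split_ifs at hab' <;> omega
  have hP0A : P0.card ≤ A.card := by
    apply Finset.card_le_card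
    intro p hp
    simp only [hP0, Finset.mem_filter] at hp
    simp only [hA, Finset.mem_filter]
    exact ⟨hp.1, hp.2.2⟩
  have hP1B : P1.card ≤ B.card := by
    apply Finset.card_le_card_of_injOn (f := fun p => p - 1)
    · intro p hp
      simp only [Finset.mem_coe, hP1, Finset.mem_filter, hR, Finset.mem_range] at hp
      simp only [Finset.mem_coe, hB, Finset.mem_filter, hR, Finset.mem_range]
      have : p - 1 + 1 = p := by omega
      rw [this]
      exact ⟨by omega, hp.2.2⟩
    · intro a ha b hb hab
      simp only [Finset.mem_coe, hP1, Finset.mem_filter, hR, Finset.mem_range] at ha hb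
      have hab' : a - 1 = b - 1 := hab
      omega
  have hstep3 : k - 1 ≤ A.card + B.card := by
    calc k - 1 ≤ (P0 ∪ P1).card := hstep3a
      _ ≤ P0.card + P1.card := Finset.card_union_le _ _
      _ ≤ A.card + B.card := Nat.add_le_add hP0A hP1B
  -- Step 4 : sum of the six counts ≤ 2k - 1
  set C : Fin 3 → Finset ℕ := fun i => R.filter (fun t => s t = i) with hC
  have hpairs : ∀ i j j' : Fin 3, j ≠ j' → (F i j).card + (F i j').card ≤ (C i).card := by
    intro i j j' hjj'
    have hdisj : Disjoint (F i j) (F i j') := by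
      rw [Finset.disjoint_left]
      intro t h1 h2
      simp only [hF, Finset.mem_filter] at h1 h2
      exact hjj' (h1.2.2 ▸ h2.2.2 ▸ rfl)
    rw [← Finset.card_union_of_disjoint hdisj]
    apply Finset.card_le_card
    intro t ht
    rcases Finset.mem_union.mp ht with h | h <;>
      · simp only [hF, Finset.mem_filter] at h
        simp only [hC, Finset.mem_filter]
        exact ⟨h.1, h.2.1⟩
  have hCsum : (C 0).card + (C 1).card + (C 2).card ≤ n := by
    have hd01 : Disjoint (C 0) (C 1) := by
      rw [Finset.disjoint_left]
      intro t h1 h2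
      simp only [hC, Finset.mem_filter] at h1 h2
      exact absurd (h1.2 ▸ h2.2 ▸ rfl) (by decide : (0 : Fin 3) ≠ 1)
    have hd012 : Disjoint (C 0 ∪ C 1) (C 2) := by
      rw [Finset.disjoint_left]
      intro t h1 h2
      simp only [hC, Finset.mem_filter] at h2
      rcases Finset.mem_union.mp h1 with h | h <;>
        simp only [hC, Finset.mem_filter] at h
      · exact absurd (h.2 ▸ h2.2 ▸ rfl) (by decide : (0 : Fin 3) ≠ 2)
      · exact absurd (h.2 ▸ h2.2 ▸ rfl) (by decide : (1 : Fin 3) ≠ 2)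
    calc (C 0).card + (C 1).card + (C 2).card
        = (C 0 ∪ C 1 ∪ C 2).card := by
          rw [Finset.card_union_of_disjoint hd012, Finset.card_union_of_disjoint hd01]
      _ ≤ R.card := Finset.card_le_card (by
          intro t ht
          rcases Finset.mem_union.mp ht with h | h
          · rcases Finset.mem_union.mp h with h | h <;>
              · simp only [hC, Finset.mem_filter] at h; exact h.1
          · simp only [hC, Finset.mem_filter] at h; exact h.1)
      _ = n := Finset.card_range n
  have hsum6 : (F 0 1).card + (F 0 2).card + ((F 1 0).card + (F 1 2).card)
      + ((F 2 0).card + (F 2 1).card) ≤ n := by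
    have h0 := hpairs 0 1 2 (by decide)
    have h1 := hpairs 1 0 2 (by decide)
    have h2 := hpairs 2 0 1 (by decide)
    omega
  -- Final arithmetic
  rw [htc, htc, htc, htc, htc, htc]
  set a := (F 0 1).card
  set b := (F 0 2).card
  set c := (F 1 0).card
  set d := (F 1 2).card
  set e := (F 2 0).card
  set f := (F 2 1).card
  have h1 : k - 1 ≤ 2 * a + b + f := by omega
  have h2 : a + b + c + d + e + f ≤ 2 * k - 1 := by omega
  obtain ⟨m, rfl⟩ : ∃ m, k = m + 1 := ⟨k - 1, by omega⟩
  have h1' : m ≤ 2 * a + b + f := by omega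
  have h2' : a + b + c + d + e + f ≤ 2 * m + 1 := by omega
  rw [show 3 * (m + 1) - 1 = 3 * m + 2 from by omega,
      show (m + 1) - 1 = m from by omega]
  nlinarith [mul_le_mul_right h2' m, mul_le_mul_right h1' (2 * m + 1)]
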